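/- Let 0 < κ₁ < 1, κ₂ ≥ 1 and a₁, a₂ ≥ 0, and set τ₁ = 1 + a₁, η₁ = κ₁/τ₁, τ₂ = κ₂ + a₂, η₂ = κ₂/τ₂. Then the conjunction of the two inequalities 2 − η₁ − τ₂(2−η₁−η₂) > 0 and 2 − η₂ − τ₁(2−η₁−η₂) > 0 is equivalent to the conjunction a₁ < κ₁(κ₂+a₂)/(κ₂+2a₂) and a₂ < 1 − κ₂(1+a₁−κ₁)/(2(1+a₁)−κ₁). (This is the algebraic reduction giving case (ii) of Proposition 2: under these conditions the channel Φ(κ₁,μ₁)⊗Φ(κ₂,μ₂), an attenuator tensored with an amplifier, is not entanglement annihilating.) -/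

import Mathlib

/-- Case (ii) of Proposition 2 (attenuator ⊗ amplifier): algebraic reduction of the
entanglement-preservation conditions. -/
theorem prop2_case_ii (κ₁ κ₂ a₁ a₂ : ℝ)
    (hκ₁ : 0 < κ₁) (hκ₁' : κ₁ < 1) (hκ₂ : 1 ≤ κ₂)
    (ha₁ : 0 ≤ a₁) (ha₂ : 0 ≤ a₂) :
    (0 < 2 - κ₁ / (1 + a₁) - (κ₂ + a₂) * (2 - κ₁ / (1 + a₁) - κ₂ / (κ₂ + a₂)) ∧
     0 < 2 - κ₂ / (κ₂ + a₂) - (1 + a₁) * (2 - κ₁ / (1 + a₁) - κ₂ / (κ₂ + a₂))) ↔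
    (a₁ < κ₁ * (κ₂ + a₂) / (κ₂ + 2 * a₂) ∧
     a₂ < 1 - κ₂ * (1 + a₁ - κ₁) / (2 * (1 + a₁) - κ₁)) := by
  have h1 : (0:ℝ) < 1 + a₁ := by linarith
  have h2 : (0:ℝ) < κ₂ + a₂ := by linarith
  have h3 : (0:ℝ) < κ₂ + 2 * a₂ := by linarith
  have h4 : (0:ℝ) < 2 * (1 + a₁) - κ₁ := by linarith
  have hA : (0 < 2 - κ₁ / (1 + a₁) - (κ₂ + a₂) * (2 - κ₁ / (1 + a₁) - κ₂ / (κ₂ + a₂))) ↔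
      a₂ < 1 - κ₂ * (1 + a₁ - κ₁) / (2 * (1 + a₁) - κ₁) := by
    have e1 : 2 - κ₁ / (1 + a₁) - (κ₂ + a₂) * (2 - κ₁ / (1 + a₁) - κ₂ / (κ₂ + a₂)) =
        ((2 * (1 + a₁) - κ₁ - κ₂ * (1 + a₁ - κ₁)) - a₂ * (2 * (1 + a₁) - κ₁)) / (1 + a₁) := by
      field_simp
      ring
    have e2 : 1 - κ₂ * (1 + a₁ - κ₁) / (2 * (1 + a₁) - κ₁) =
        (2 * (1 + a₁) - κ₁ - κ₂ * (1 + a₁ - κ₁)) / (2 * (1 + a₁) - κ₁) := by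
      rw [sub_div, div_self h4.ne']
    rw [e1, e2, lt_div_iff₀ h4, div_pos_iff]
    constructor
    · rintro (⟨h, -⟩ | ⟨-, h⟩) <;> nlinarith
    · intro h
      left
      constructor <;> nlinarith
  have hB : (0 < 2 - κ₂ / (κ₂ + a₂) - (1 + a₁) * (2 - κ₁ / (1 + a₁) - κ₂ / (κ₂ + a₂))) ↔
      a₁ < κ₁ * (κ₂ + a₂) / (κ₂ + 2 * a₂) := by
    have e1 : 2 - κ₂ / (κ₂ + a₂) - (1 + a₁) * (2 - κ₁ / (1 + a₁) - κ₂ / (κ₂ + a₂)) =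
        (κ₁ * (κ₂ + a₂) - a₁ * (κ₂ + 2 * a₂)) / (κ₂ + a₂) := by
      field_simp
      ring
    rw [e1, lt_div_iff₀ h3, div_pos_iff]
    constructor
    · rintro (⟨h, -⟩ | ⟨-, h⟩) <;> nlinarith
    · intro h
      left
      constructor <;> nlinarith
  rw [hA, hB, and_comm]
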